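/- Let m ≥ 1 be a natural number, let ν > 0 and c > 0, and let a be a real number with a ≥ ν/2 + 1 or a ≤ 1 − m/2. Then ∫_0^∞ t^{-(m/2 + a)} (ν + c/t)^{-(ν+m)/2} dt = +∞, i.e., the function t ↦ t^{-(m/2 + a)} (ν + c/t)^{-(ν+m)/2} is not Lebesgue integrable on (0, ∞). -/

import Mathlib

open MeasureTheory Real

lemma aux_rpow_meas (r : ℝ) (S : Set ℝ) :
    AEStronglyMeasurable (fun t : ℝ => t ^ r) (volume.restrict S) := by
  apply Measurable.aestronglyMeasurable
  fun_prop

lemma aux_Ioo_top {r : ℝ} (hr : r ≤ -1) :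
    ∫⁻ t in Set.Ioo (0:ℝ) 1, ENNReal.ofReal (t ^ r) = ⊤ := by
  by_contra h
  have hlt : (∫⁻ t in Set.Ioo (0:ℝ) 1, ENNReal.ofReal (t ^ r)) < ⊤ := lt_top_iff_ne_top.2 h
  have hnn : 0 ≤ᵐ[volume.restrict (Set.Ioo (0:ℝ) 1)] fun t : ℝ => t ^ r := by
    filter_upwards [ae_restrict_mem measurableSet_Ioo] with t ht
    exact Real.rpow_nonneg ht.1.le r
  have hint : IntegrableOn (fun t : ℝ => t ^ r) (Set.Ioo 0 1) :=
    ⟨aux_rpow_meas r _, (hasFiniteIntegral_iff_ofReal hnn).2 hlt⟩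
  have := (intervalIntegral.integrableOn_Ioo_rpow_iff one_pos).1 hint
  linarith

lemma aux_Ioi_top {r : ℝ} (hr : -1 ≤ r) :
    ∫⁻ t in Set.Ioi (1:ℝ), ENNReal.ofReal (t ^ r) = ⊤ := by
  by_contra h
  have hlt : (∫⁻ t in Set.Ioi (1:ℝ), ENNReal.ofReal (t ^ r)) < ⊤ := lt_top_iff_ne_top.2 h
  have hnn : 0 ≤ᵐ[volume.restrict (Set.Ioi (1:ℝ))] fun t : ℝ => t ^ r := by
    filter_upwards [ae_restrict_mem measurableSet_Ioi] with t ht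
    exact Real.rpow_nonneg (le_trans zero_le_one ht.le) r
  have hint : IntegrableOn (fun t : ℝ => t ^ r) (Set.Ioi 1) :=
    ⟨aux_rpow_meas r _, (hasFiniteIntegral_iff_ofReal hnn).2 hlt⟩
  have := (integrableOn_Ioi_rpow_iff one_pos).1 hint
  linarith

lemma aux_const_mul_top {K : ℝ} (hK : 0 < K) {g : ℝ → ℝ} {S : Set ℝ}
    (hg : ∫⁻ t in S, ENNReal.ofReal (g t) = ⊤) :
    ∫⁻ t in S, ENNReal.ofReal (K * g t) = ⊤ := by
  have h1 : ∀ t : ℝ, ENNReal.ofReal (K * g t) = ENNReal.ofReal K * ENNReal.ofReal (g t) :=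
    fun t => ENNReal.ofReal_mul hK.le
  simp_rw [h1]
  rw [lintegral_const_mul' _ _ ENNReal.ofReal_ne_top, hg, ENNReal.mul_top]
  simp [ENNReal.ofReal_eq_zero, not_le, hK]

/-- Divergence of the σ²-integral when the propriety condition of Proposition 1 fails. -/
theorem stmt6 (m : ℕ) (hm : 1 ≤ m) (ν c a : ℝ) (hν : 0 < ν) (hc : 0 < c)
    (ha : ν / 2 + 1 ≤ a ∨ a ≤ 1 - (m : ℝ) / 2) :
    (∫⁻ t in Set.Ioi (0 : ℝ),
        ENNReal.ofReal (t ^ (-((m : ℝ) / 2 + a)) * (ν + c / t) ^ (-(ν + m) / 2)) = ⊤) ∧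
    ¬ MeasureTheory.IntegrableOn
        (fun t : ℝ => t ^ (-((m : ℝ) / 2 + a)) * (ν + c / t) ^ (-(ν + m) / 2))
        (Set.Ioi 0) := by
  set p : ℝ := (ν + m) / 2 with hp
  have hppos : 0 < p := by positivity
  set K : ℝ := (ν + c) ^ (-p) with hK
  have hKpos : 0 < K := Real.rpow_pos_of_pos (by linarith) _
  set f : ℝ → ℝ := fun t => t ^ (-((m : ℝ) / 2 + a)) * (ν + c / t) ^ (-(ν + m) / 2) with hf
  have hexp : -(ν + m) / 2 = -p := by rw [hp]; ring
  have key : (∫⁻ t in Set.Ioi (0 : ℝ), ENNReal.ofReal (f t)) = ⊤ := by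
    rcases ha with ha | ha
    · -- divergence at 0, use Ioo 0 1
      have h1 : ∀ t ∈ Set.Ioo (0:ℝ) 1, K * t ^ (ν / 2 - a) ≤ f t := by
        intro t ht
        obtain ⟨ht0, ht1⟩ := ht
        have hle : ν + c / t ≤ (ν + c) / t := by
          rw [add_div]
          have : ν ≤ ν / t := by
            rw [le_div_iff₀ ht0]; nlinarith
          linarith
        have hpos : (0:ℝ) < ν + c / t := by positivity
        have h2 : ((ν + c) / t) ^ (-p) ≤ (ν + c / t) ^ (-p) :=
          Real.rpow_le_rpow_of_nonpos hpos hle (by linarith)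
        have h3 : ((ν + c) / t) ^ (-p) = K * t ^ p := by
          rw [Real.div_rpow (by linarith) ht0.le, Real.rpow_neg ht0.le p, div_eq_mul_inv, inv_inv, hK]
        have h4 : t ^ (-((m : ℝ) / 2 + a)) * (K * t ^ p)
            ≤ t ^ (-((m : ℝ) / 2 + a)) * (ν + c / t) ^ (-p) := by
          rw [← h3]
          exact mul_le_mul_of_nonneg_left h2 (Real.rpow_nonneg ht0.le _)
        have h5 : t ^ (-((m : ℝ) / 2 + a)) * (K * t ^ p) = K * t ^ (ν / 2 - a) := by
          have : (ν / 2 - a) = (-((m : ℝ) / 2 + a)) + p := by rw [hp]; ring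
          rw [this, Real.rpow_add ht0]; ring
        rw [hf, hexp]
        calc K * t ^ (ν / 2 - a) = t ^ (-((m : ℝ) / 2 + a)) * (K * t ^ p) := h5.symm
          _ ≤ _ := h4
      have htop : ∫⁻ t in Set.Ioo (0:ℝ) 1, ENNReal.ofReal (K * t ^ (ν / 2 - a)) = ⊤ :=
        aux_const_mul_top hKpos (aux_Ioo_top (by linarith))
      have hmono : (∫⁻ t in Set.Ioo (0:ℝ) 1, ENNReal.ofReal (K * t ^ (ν / 2 - a)))
          ≤ ∫⁻ t in Set.Ioo (0:ℝ) 1, ENNReal.ofReal (f t) := by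
        refine lintegral_mono_ae ?_
        filter_upwards [ae_restrict_mem measurableSet_Ioo] with t ht
        exact ENNReal.ofReal_le_ofReal (h1 t ht)
      have hsub : (∫⁻ t in Set.Ioo (0:ℝ) 1, ENNReal.ofReal (f t))
          ≤ ∫⁻ t in Set.Ioi (0:ℝ), ENNReal.ofReal (f t) :=
        lintegral_mono_set (fun t ht => ht.1)
      rw [htop] at hmono
      exact top_le_iff.1 (le_trans hmono hsub)
    · -- divergence at ∞, use Ioi 1
      have h1 : ∀ t ∈ Set.Ioi (1:ℝ), K * t ^ (-((m : ℝ) / 2 + a)) ≤ f t := by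
        intro t ht
        have ht1 : (1:ℝ) < t := ht
        have ht0 : (0:ℝ) < t := lt_trans one_pos ht1
        have hle : ν + c / t ≤ ν + c := by
          have : c / t ≤ c := by
            rw [div_le_iff₀ ht0]; nlinarith [mul_le_mul_of_nonneg_left ht1.le hc.le]
          linarith
        have hpos : (0:ℝ) < ν + c / t := by positivity
        have h2 : (ν + c) ^ (-p) ≤ (ν + c / t) ^ (-p) :=
          Real.rpow_le_rpow_of_nonpos hpos hle (by linarith)
        rw [hf, hexp, mul_comm K]
        exact mul_le_mul_of_nonneg_left h2 (Real.rpow_nonneg ht0.le _)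
      have htop : ∫⁻ t in Set.Ioi (1:ℝ), ENNReal.ofReal (K * t ^ (-((m : ℝ) / 2 + a))) = ⊤ :=
        aux_const_mul_top hKpos (aux_Ioi_top (by
          have : (1:ℝ) ≤ m := by exact_mod_cast hm
          linarith))
      have hmono : (∫⁻ t in Set.Ioi (1:ℝ), ENNReal.ofReal (K * t ^ (-((m : ℝ) / 2 + a))))
          ≤ ∫⁻ t in Set.Ioi (1:ℝ), ENNReal.ofReal (f t) := by
        refine lintegral_mono_ae ?_
        filter_upwards [ae_restrict_mem measurableSet_Ioi] with t ht
        exact ENNReal.ofReal_le_ofReal (h1 t ht)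
      have hsub : (∫⁻ t in Set.Ioi (1:ℝ), ENNReal.ofReal (f t))
          ≤ ∫⁻ t in Set.Ioi (0:ℝ), ENNReal.ofReal (f t) :=
        lintegral_mono_set (fun t ht => Set.mem_Ioi.2 (lt_trans one_pos (Set.mem_Ioi.1 ht)))
      rw [htop] at hmono
      exact top_le_iff.1 (le_trans hmono hsub)
  refine ⟨key, fun hint => ?_⟩
  have hnn : 0 ≤ᵐ[volume.restrict (Set.Ioi (0:ℝ))] f := by
    filter_upwards [ae_restrict_mem measurableSet_Ioi] with t ht
    have ht0 : (0:ℝ) < t := ht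
    have h1 : (0:ℝ) < ν + c / t := by positivity
    exact mul_nonneg (Real.rpow_nonneg (le_of_lt ht) _) (Real.rpow_nonneg h1.le _)
  have := (hasFiniteIntegral_iff_ofReal hnn).1 hint.2
  rw [key] at this
  exact (lt_irrefl _ this)
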